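/- Let n, D ∈ ℕ with D ≥ 1 and let k be a real number. Let Γ be a finite simple graph and T a set of vertices of Γ such that the induced subgraph Γ' = Γ \ T is triangle-free. Suppose the maximum degree of Γ is at most D, Γ' has exactly n vertices, and Γ' has at least n/2 + k edges. Then mis(Γ) ≤ 2^{n/2 − k/(100D²) + 2|T|}. -/

import Mathlib

set_option linter.unusedSectionVars false

open Finset

section Counting
variable {V : Type*} [Fintype V] [DecidableEq V] (G : SimpleGraph V) [DecidableRel G.Adj]

/-- Finsets that are maximal independent sets within `s`. -/
def misSet (s : Finset V) : Finset (Finset V) :=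
  s.powerset.filter (fun I => (∀ x ∈ I, ∀ y ∈ I, ¬ G.Adj x y) ∧
    ∀ v ∈ s, v ∉ I → ∃ u ∈ I, G.Adj v u)

/-- Sum of degrees within `s`. -/
def dsum (s : Finset V) : ℕ := ∑ v ∈ s, (s.filter (G.Adj v)).card

/-- Closed neighbourhood of `v` inside `s`. -/
def cnbhd (s : Finset V) (v : V) : Finset V := insert v (s.filter (G.Adj v))

variable {G}

lemma mem_misSet {s I : Finset V} :
    I ∈ misSet G s ↔ I ⊆ s ∧ (∀ x ∈ I, ∀ y ∈ I, ¬ G.Adj x y) ∧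
      ∀ v ∈ s, v ∉ I → ∃ u ∈ I, G.Adj v u := by
  simp [misSet, and_assoc]

lemma misSet_empty : misSet G (∅ : Finset V) = {∅} := by
  ext I
  simp only [mem_misSet, Finset.mem_singleton, subset_empty]
  constructor
  · rintro ⟨h, -, -⟩; exact h
  · rintro rfl; simp

lemma cnbhd_subset {s : Finset V} {v : V} (hv : v ∈ s) : cnbhd G s v ⊆ s :=
  insert_subset hv (filter_subset _ _)

lemma card_cnbhd {s : Finset V} (v : V) :
    (cnbhd G s v).card = (s.filter (G.Adj v)).card + 1 := by
  rw [cnbhd, card_insert_of_notMem (by simp [G.irrefl])]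

lemma incid_comm (a b : Finset V) :
    ∑ x ∈ a, (b.filter (G.Adj x)).card = ∑ y ∈ b, (a.filter (G.Adj y)).card := by
  simp only [card_filter]
  rw [Finset.sum_comm]
  refine Finset.sum_congr rfl fun y _ => Finset.sum_congr rfl fun x _ => ?_
  simp [G.adj_comm]

lemma filter_adj_card_le_degree (s : Finset V) (v : V) :
    (s.filter (G.Adj v)).card ≤ G.degree v := by
  rw [← SimpleGraph.card_neighborFinset_eq_degree]
  exact card_le_card (fun x hx => by
    simp only [mem_filter] at hx; simpa [SimpleGraph.mem_neighborFinset] using hx.2)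

/-- Sharp form of the degree-sum deletion bound. -/
lemma dsum_sdiff_le' (s R : Finset V) (hR : R ⊆ s) :
    dsum G s ≤ dsum G (s \ R) + ((∑ x ∈ R, (s.filter (G.Adj x)).card)
      + ∑ x ∈ R, ((s \ R).filter (G.Adj x)).card) := by
  have hsplit : dsum G s
      = ∑ x ∈ s \ R, (s.filter (G.Adj x)).card + ∑ x ∈ R, (s.filter (G.Adj x)).card := by
    rw [dsum, ← Finset.sum_sdiff hR]
  have h1 : ∀ x ∈ s \ R, (s.filter (G.Adj x)).card
      ≤ ((s \ R).filter (G.Adj x)).card + (R.filter (G.Adj x)).card := by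
    intro x _
    have : s.filter (G.Adj x) ⊆ (s \ R).filter (G.Adj x) ∪ R.filter (G.Adj x) := by
      rw [← filter_union, sdiff_union_of_subset hR]
    exact (card_le_card this).trans (card_union_le _ _)
  have h2 : ∑ x ∈ s \ R, (s.filter (G.Adj x)).card
      ≤ dsum G (s \ R) + ∑ x ∈ s \ R, (R.filter (G.Adj x)).card := by
    rw [dsum, ← Finset.sum_add_distrib]
    exact Finset.sum_le_sum h1
  have h3 : ∑ x ∈ s \ R, (R.filter (G.Adj x)).card
      = ∑ x ∈ R, ((s \ R).filter (G.Adj x)).card := incid_comm _ _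
  omega

lemma dsum_sdiff_le (s R : Finset V) (hR : R ⊆ s) :
    dsum G s ≤ dsum G (s \ R) + 2 * ∑ x ∈ R, (s.filter (G.Adj x)).card := by
  have := dsum_sdiff_le' (G := G) s R hR
  have h4 : ∑ x ∈ R, ((s \ R).filter (G.Adj x)).card
      ≤ ∑ x ∈ R, (s.filter (G.Adj x)).card :=
    Finset.sum_le_sum fun x _ => card_le_card (filter_subset_filter _ (sdiff_subset))
  omega


lemma card_mem_avoid_le {s : Finset V} {v : V} (hv : v ∈ s) (F : Finset V)
    (hF : ∀ x ∈ F, ¬ G.Adj v x ∧ x ≠ v) :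
    ((misSet G s).filter (fun I => v ∈ I ∧ ∀ x ∈ F, x ∉ I)).card
      ≤ (misSet G ((s \ cnbhd G s v) \ F)).card := by
  apply Finset.card_le_card_of_injOn (fun I => I.erase v)
  · intro I hI
    simp only [mem_coe, mem_filter] at hI ⊢
    obtain ⟨hIm, hvI, hFI⟩ := hI
    rw [mem_misSet] at hIm ⊢
    obtain ⟨hsub, hind, hdom⟩ := hIm
    refine ⟨?_, ?_, ?_⟩
    · intro x hx
      obtain ⟨hxv, hxI⟩ := Finset.mem_erase.mp hx
      simp only [mem_sdiff, cnbhd, mem_insert, mem_filter, not_or, not_and]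
      exact ⟨⟨hsub hxI, hxv, fun _ hadj => hind v hvI x hxI hadj⟩, fun h => hFI x h hxI⟩
    · intro x hx y hy
      exact hind x (Finset.mem_of_mem_erase hx) y (Finset.mem_of_mem_erase hy)
    · intro x hx hxI
      simp only [mem_sdiff, cnbhd, mem_insert, mem_filter, not_or] at hx
      obtain ⟨⟨hxs, hxv, hxadj⟩, hxF⟩ := hx
      have hxI' : x ∉ I := fun h => hxI (Finset.mem_erase.mpr ⟨hxv, h⟩)
      obtain ⟨y, hyI, hadj⟩ := hdom x hxs hxI'
      have hyv : y ≠ v := by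
        rintro rfl
        exact hxadj ⟨hxs, hadj.symm⟩
      exact ⟨y, Finset.mem_erase.mpr ⟨hyv, hyI⟩, hadj⟩
  · intro I hI J hJ h
    simp only [coe_filter, Set.mem_setOf_eq] at hI hJ
    simp only at h
    rw [← Finset.insert_erase hI.2.1, ← Finset.insert_erase hJ.2.1, h]

lemma card_mem_le {s : Finset V} {v : V} (hv : v ∈ s) :
    ((misSet G s).filter (fun I => v ∈ I)).card ≤ (misSet G (s \ cnbhd G s v)).card := by
  have := card_mem_avoid_le (G := G) hv ∅ (by simp)
  simpa using this

lemma card_notmem_le {s : Finset V} (v : V) :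
    ((misSet G s).filter (fun I => v ∉ I)).card ≤ (misSet G (s.erase v)).card := by
  apply Finset.card_le_card_of_injOn id
  · intro I hI
    simp only [mem_coe, mem_filter, id_eq] at hI ⊢
    obtain ⟨hIm, hvI⟩ := hI
    rw [mem_misSet] at hIm ⊢
    obtain ⟨hsub, hind, hdom⟩ := hIm
    refine ⟨?_, hind, ?_⟩
    · intro x hx
      exact Finset.mem_erase.mpr ⟨fun h => hvI (h ▸ hx), hsub hx⟩
    · intro x hx hxI
      exact hdom x (Finset.mem_of_mem_erase hx) hxI
  · exact fun a _ b _ h => h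

end Counting

section Analytic

lemma xle : (2:ℝ)^(-(49:ℝ)/100) ≤ 57/80 := by
  have h2 : ((2:ℝ)^(-(49:ℝ)/100))^(100:ℕ) = 2^(-(49:ℝ)) := by
    rw [← Real.rpow_natCast ((2:ℝ)^(-(49:ℝ)/100)) 100, ← Real.rpow_mul (by norm_num)]
    norm_num
  refine le_of_pow_le_pow_left₀ (n := 100) (by norm_num) (by norm_num) ?_
  rw [h2, Real.rpow_neg (by norm_num), show ((49:ℝ)) = ((49:ℕ):ℝ) by norm_num,
    Real.rpow_natCast, inv_le_comm₀ (by positivity) (by positivity)]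
  norm_num

lemma rpow_mul_nat (a : ℝ) (m : ℕ) : (2:ℝ)^(a * m) = ((2:ℝ)^a)^m := by
  rw [← Real.rpow_natCast ((2:ℝ)^a) m, ← Real.rpow_mul (by norm_num)]

/-- two-term combination, exponent drops 49/100 and 196/100 -/
lemma comb2a {M c1 c2 E E1 E2 : ℝ} (hM : M ≤ c1 + c2) (h1 : c1 ≤ 2^E1) (h2 : c2 ≤ 2^E2)
    (d1 : E1 ≤ E - 49/100) (d2 : E2 ≤ E - 196/100) : M ≤ 2^E := by
  set x : ℝ := (2:ℝ)^(-(49:ℝ)/100) with hxdef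
  have hx : x ≤ 57/80 := xle
  have hx0 : 0 ≤ x := Real.rpow_nonneg (by norm_num) _
  have hE0 : (0:ℝ) ≤ 2^E := Real.rpow_nonneg (by norm_num) _
  have k1 : (2:ℝ)^E1 ≤ 2^E * x := by
    rw [hxdef, ← Real.rpow_add (by norm_num)]
    exact Real.rpow_le_rpow_of_exponent_le one_le_two (by linarith)
  have k2 : (2:ℝ)^E2 ≤ 2^E * x^(4:ℕ) := by
    rw [hxdef, ← rpow_mul_nat, ← Real.rpow_add (by norm_num)]
    exact Real.rpow_le_rpow_of_exponent_le one_le_two (by push_cast; linarith)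
  have hx4 : x^(4:ℕ) ≤ (57/80:ℝ)^(4:ℕ) := pow_le_pow_left₀ hx0 hx 4
  nlinarith [mul_le_mul_of_nonneg_left hx hE0, mul_le_mul_of_nonneg_left hx4 hE0]

/-- two-term combination, exponent drops 98/100 and 147/100 -/
lemma comb2b {M c1 c2 E E1 E2 : ℝ} (hM : M ≤ c1 + c2) (h1 : c1 ≤ 2^E1) (h2 : c2 ≤ 2^E2)
    (d1 : E1 ≤ E - 98/100) (d2 : E2 ≤ E - 147/100) : M ≤ 2^E := by
  set x : ℝ := (2:ℝ)^(-(49:ℝ)/100) with hxdef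
  have hx : x ≤ 57/80 := xle
  have hx0 : 0 ≤ x := Real.rpow_nonneg (by norm_num) _
  have hE0 : (0:ℝ) ≤ 2^E := Real.rpow_nonneg (by norm_num) _
  have k1 : (2:ℝ)^E1 ≤ 2^E * x^(2:ℕ) := by
    rw [hxdef, ← rpow_mul_nat, ← Real.rpow_add (by norm_num)]
    exact Real.rpow_le_rpow_of_exponent_le one_le_two (by push_cast; linarith)
  have k2 : (2:ℝ)^E2 ≤ 2^E * x^(3:ℕ) := by
    rw [hxdef, ← rpow_mul_nat, ← Real.rpow_add (by norm_num)]
    exact Real.rpow_le_rpow_of_exponent_le one_le_two (by push_cast; linarith)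
  have hx2 : x^(2:ℕ) ≤ (57/80:ℝ)^(2:ℕ) := pow_le_pow_left₀ hx0 hx 2
  have hx3 : x^(3:ℕ) ≤ (57/80:ℝ)^(3:ℕ) := pow_le_pow_left₀ hx0 hx 3
  nlinarith [mul_le_mul_of_nonneg_left hx2 hE0, mul_le_mul_of_nonneg_left hx3 hE0]

/-- three-term combination, exponent drops 147/100, 147/100, 196/100 -/
lemma comb3 {M c1 c2 c3 E E1 E2 E3 : ℝ} (hM : M ≤ c1 + c2 + c3)
    (h1 : c1 ≤ 2^E1) (h2 : c2 ≤ 2^E2) (h3 : c3 ≤ 2^E3)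
    (d1 : E1 ≤ E - 147/100) (d2 : E2 ≤ E - 147/100) (d3 : E3 ≤ E - 196/100) : M ≤ 2^E := by
  set x : ℝ := (2:ℝ)^(-(49:ℝ)/100) with hxdef
  have hx : x ≤ 57/80 := xle
  have hx0 : 0 ≤ x := Real.rpow_nonneg (by norm_num) _
  have hE0 : (0:ℝ) ≤ 2^E := Real.rpow_nonneg (by norm_num) _
  have k1 : (2:ℝ)^E1 ≤ 2^E * x^(3:ℕ) := by
    rw [hxdef, ← rpow_mul_nat, ← Real.rpow_add (by norm_num)]
    exact Real.rpow_le_rpow_of_exponent_le one_le_two (by push_cast; linarith)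
  have k2 : (2:ℝ)^E2 ≤ 2^E * x^(3:ℕ) := by
    rw [hxdef, ← rpow_mul_nat, ← Real.rpow_add (by norm_num)]
    exact Real.rpow_le_rpow_of_exponent_le one_le_two (by push_cast; linarith)
  have k3 : (2:ℝ)^E3 ≤ 2^E * x^(4:ℕ) := by
    rw [hxdef, ← rpow_mul_nat, ← Real.rpow_add (by norm_num)]
    exact Real.rpow_le_rpow_of_exponent_le one_le_two (by push_cast; linarith)
  have hx3 : x^(3:ℕ) ≤ (57/80:ℝ)^(3:ℕ) := pow_le_pow_left₀ hx0 hx 3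
  have hx4 : x^(4:ℕ) ≤ (57/80:ℝ)^(4:ℕ) := pow_le_pow_left₀ hx0 hx 4
  nlinarith [mul_le_mul_of_nonneg_left hx3 hE0, mul_le_mul_of_nonneg_left hx4 hE0]

/-- doubling combination for the isolated-edge case -/
lemma combEdge {M c1 E E1 : ℝ} (hM : M ≤ 2 * c1) (h1 : c1 ≤ 2^E1) (hc : 0 ≤ c1)
    (d1 : E1 ≤ E - 1) : M ≤ 2^E := by
  have : (2:ℝ) * 2^E1 ≤ 2^E := by
    have : (2:ℝ) * 2^E1 = 2^(E1 + 1) := by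
      rw [Real.rpow_add (by norm_num), Real.rpow_one]; ring
    rw [this]
    exact Real.rpow_le_rpow_of_exponent_le one_le_two (by linarith)
  linarith

end Analytic

lemma Ediff (D : ℕ) (hD : 1 ≤ D) {r n ni m mi : ℝ} (hr : 0 ≤ r)
    (h1 : ni ≤ n - r) (h2 : m ≤ mi + 2*r*D) :
    (1/2 + 1/(200*(D:ℝ)^2)) * ni - (1/(200*(D:ℝ)^2)) * mi
      ≤ ((1/2 + 1/(200*(D:ℝ)^2)) * n - (1/(200*(D:ℝ)^2)) * m) - (49/100)*r := by
  set t : ℝ := (D:ℝ) with ht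
  have ht1 : (1:ℝ) ≤ t := by rw [ht]; exact_mod_cast hD
  have ht0 : (0:ℝ) < t := by linarith
  set C : ℝ := 1/(200*t^2) with hC
  have hC0 : 0 ≤ C := by positivity
  have hCval : C * (2*t) = 1/(100*t) := by
    field_simp [hC]
    rw [hC]; field_simp; norm_num
  have hC2 : C * (2*t) ≤ 1/100 := by
    rw [hCval]
    rw [div_le_div_iff₀ (by positivity) (by norm_num)]
    linarith
  have hA : (1:ℝ)/2 ≤ 1/2 + C := by linarith
  have e1 : (1/2 + C) * ni ≤ (1/2 + C) * n - (1/2 + C) * r := by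
    have := mul_le_mul_of_nonneg_left h1 (by linarith : (0:ℝ) ≤ 1/2 + C)
    linarith [this]
  have e2 : C * m ≤ C * mi + (C * (2*t)) * r := by
    have := mul_le_mul_of_nonneg_left h2 hC0
    nlinarith [this]
  have e3 : (C * (2*t)) * r ≤ (1/100) * r := mul_le_mul_of_nonneg_right hC2 hr
  have e4 : (1/2) * r ≤ (1/2 + C) * r := mul_le_mul_of_nonneg_right hA hr
  linarith

lemma EdiffEdge (D : ℕ) (hD : 1 ≤ D) {n ni m mi : ℝ}
    (h1 : ni ≤ n - 2) (h2 : m ≤ mi + 2) :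
    (1/2 + 1/(200*(D:ℝ)^2)) * ni - (1/(200*(D:ℝ)^2)) * mi
      ≤ ((1/2 + 1/(200*(D:ℝ)^2)) * n - (1/(200*(D:ℝ)^2)) * m) - 1 := by
  set t : ℝ := (D:ℝ) with ht
  have ht1 : (1:ℝ) ≤ t := by rw [ht]; exact_mod_cast hD
  set C : ℝ := 1/(200*t^2) with hC
  have hC0 : 0 ≤ C := by positivity
  have e1 : (1/2 + C) * ni ≤ (1/2 + C) * n - (1/2 + C) * 2 :=
    by nlinarith [mul_le_mul_of_nonneg_left h1 (by linarith : (0:ℝ) ≤ 1/2 + C)]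
  have e2 : C * m ≤ C * mi + C * 2 := by nlinarith [mul_le_mul_of_nonneg_left h2 hC0]
  linarith

set_option maxHeartbeats 2000000 in
open Finset in
theorem keyLemma (D : ℕ) (hD : 1 ≤ D) {V : Type*} [Fintype V] [DecidableEq V]
    (G : SimpleGraph V) [DecidableRel G.Adj] (hdeg : ∀ v, G.degree v ≤ D) :
    ∀ s : Finset V,
      (∀ x ∈ s, ∀ y ∈ s, ∀ z ∈ s, G.Adj x y → G.Adj y z → G.Adj x z → False) →
      ((misSet G s).card : ℝ)
        ≤ 2 ^ ((1/2 + 1/(200*(D:ℝ)^2)) * (s.card : ℝ) - (1/(200*(D:ℝ)^2)) * (dsum G s : ℝ)) := by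
  intro s
  induction s using Finset.strongInduction with
  | _ s IH =>
  intro htri
  rcases eq_or_ne s ∅ with hs | hs
  · subst hs
    simp only [misSet_empty, card_singleton, Nat.cast_one, card_empty, Nat.cast_zero, dsum,
      Finset.sum_empty, mul_zero, sub_zero]
    rw [Real.rpow_zero]
  -- general setup
  have hdle : ∀ v : V, (s.filter (G.Adj v)).card ≤ D :=
    fun v => (filter_adj_card_le_degree s v).trans (hdeg v)
  have hIH : ∀ R : Finset V, R ⊆ s → R.Nonempty →
      ((misSet G (s \ R)).card : ℝ)
        ≤ 2 ^ ((1/2 + 1/(200*(D:ℝ)^2)) * ((s \ R).card : ℝ)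
            - (1/(200*(D:ℝ)^2)) * (dsum G (s \ R) : ℝ)) := by
    intro R hR hne
    refine IH (s \ R) ?_ ?_
    · refine Finset.ssubset_iff_of_subset (sdiff_subset) |>.mpr ?_
      obtain ⟨x, hx⟩ := hne
      exact ⟨x, hR hx, by simp [hx]⟩
    · intro x hx y hy z hz
      exact htri x (sdiff_subset hx) y (sdiff_subset hy) z (sdiff_subset hz)
  have hEd : ∀ R : Finset V, R ⊆ s →
      (1/2 + 1/(200*(D:ℝ)^2)) * (((s \ R).card : ℕ) : ℝ)
          - (1/(200*(D:ℝ)^2)) * ((dsum G (s \ R) : ℕ) : ℝ)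
        ≤ ((1/2 + 1/(200*(D:ℝ)^2)) * (s.card : ℝ) - (1/(200*(D:ℝ)^2)) * (dsum G s : ℝ))
            - (49/100) * (R.card : ℝ) := by
    intro R hR
    refine Ediff D hD (by positivity) ?_ ?_
    · rw [card_sdiff_of_subset hR]
      rw [Nat.cast_sub (card_le_card hR)]
    · have h1 := dsum_sdiff_le (G := G) s R hR
      have h2 : ∑ x ∈ R, (s.filter (G.Adj x)).card ≤ R.card * D := by
        calc ∑ x ∈ R, (s.filter (G.Adj x)).card ≤ R.card • D :=
              Finset.sum_le_card_nsmul _ _ _ (fun x _ => hdle x)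
          _ = R.card * D := nsmul_eq_mul _ _
      have h3 : dsum G s ≤ dsum G (s \ R) + 2 * (R.card * D) :=
        h1.trans (Nat.add_le_add_left (Nat.mul_le_mul_left 2 h2) _)
      have h4 : ((dsum G s : ℕ) : ℝ) ≤ ((dsum G (s \ R) + 2*(R.card*D) : ℕ) : ℝ) :=
        Nat.cast_le.mpr h3
      push_cast at h4
      linarith
  by_cases hdeg3 : ∃ v ∈ s, 3 ≤ (s.filter (G.Adj v)).card
  · -- a vertex of degree ≥ 3
    obtain ⟨v, hv, hdv⟩ := hdeg3
    have hsplit := Finset.card_filter_add_card_filter_not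
      (s := misSet G s) (p := fun I => v ∈ I)
    have hR2s : cnbhd G s v ⊆ s := cnbhd_subset hv
    have c1 := card_mem_le (G := G) hv
    have c2 := card_notmem_le (G := G) (s := s) v
    rw [Finset.erase_eq] at c2
    have hvsing : ({v} : Finset V) ⊆ s := by simpa using hv
    refine comb2a (c1 := ((misSet G (s \ {v})).card : ℝ))
      (c2 := ((misSet G (s \ cnbhd G s v)).card : ℝ)) ?_
      (hIH {v} hvsing ⟨v, mem_singleton_self v⟩)
      (hIH _ hR2s ⟨v, mem_insert_self _ _⟩) ?_ ?_
    · have : (misSet G s).card ≤ (misSet G (s \ {v})).card + (misSet G (s \ cnbhd G s v)).card := by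
        omega
      exact_mod_cast this
    · have h := hEd {v} hvsing
      simp only [card_singleton, Nat.cast_one] at h
      linarith
    · have h := hEd _ hR2s
      have hc : (4:ℝ) ≤ ((cnbhd G s v).card : ℝ) := by
        rw [card_cnbhd]
        exact_mod_cast Nat.succ_le_succ hdv
      nlinarith
  by_cases hdeg1 : ∃ v ∈ s, (s.filter (G.Adj v)).card = 1
  · -- a pendant vertex
    obtain ⟨v, hv, hdv⟩ := hdeg1
    obtain ⟨u, hu⟩ := Finset.card_eq_one.mp hdv
    have hum : u ∈ s.filter (G.Adj v) := hu ▸ mem_singleton_self u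
    have hus : u ∈ s := (mem_filter.mp hum).1
    have hvu : G.Adj v u := (mem_filter.mp hum).2
    have hne : u ≠ v := fun h => G.irrefl (h ▸ hvu)
    have forced : ∀ I ∈ misSet G s, u ∉ I → v ∈ I := by
      intro I hI huI
      by_contra hvI
      obtain ⟨y, hyI, hadj⟩ := (mem_misSet.mp hI).2.2 v hv hvI
      have hy : y ∈ s.filter (G.Adj v) := mem_filter.mpr ⟨(mem_misSet.mp hI).1 hyI, hadj⟩
      rw [hu, mem_singleton] at hy
      exact huI (hy ▸ hyI)
    have hsplit := Finset.card_filter_add_card_filter_not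
      (s := misSet G s) (p := fun I => u ∈ I)
    have c1 := card_mem_le (G := G) hus
    have c2sub : (misSet G s).filter (fun I => ¬ u ∈ I)
        ⊆ (misSet G s).filter (fun I => v ∈ I) := by
      intro I hI
      rw [mem_filter] at hI ⊢
      exact ⟨hI.1, forced I hI.1 hI.2⟩
    have c2 : ((misSet G s).filter (fun I => ¬ u ∈ I)).card
        ≤ (misSet G (s \ cnbhd G s v)).card :=
      le_trans (card_le_card c2sub) (card_mem_le hv)
    have hcnv : cnbhd G s v = {v, u} := by rw [cnbhd, hu]
    have hcnvcard : (cnbhd G s v).card = 2 := by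
      rw [hcnv, card_insert_of_notMem (by simp [Ne.symm hne]), card_singleton]
    have hRv : cnbhd G s v ⊆ s := cnbhd_subset hv
    by_cases hdu : (s.filter (G.Adj u)).card = 1
    · -- isolated edge
      have hvm : v ∈ s.filter (G.Adj u) := mem_filter.mpr ⟨hv, hvu.symm⟩
      have hufil : s.filter (G.Adj u) = {v} := by
        rw [Finset.eq_singleton_iff_unique_mem]
        exact ⟨hvm, fun x hx => Finset.card_le_one.mp (le_of_eq hdu) x hx v hvm⟩
      have hcnu : cnbhd G s u = {u, v} := by rw [cnbhd, hufil]
      have hsame : cnbhd G s u = cnbhd G s v := by rw [hcnu, hcnv]; exact pair_comm u v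
      have hM : (misSet G s).card ≤ 2 * (misSet G (s \ cnbhd G s v)).card := by
        rw [hsame] at c1
        omega
      have hds : dsum G s ≤ dsum G (s \ cnbhd G s v) + 2 := by
        have h' := dsum_sdiff_le' (G := G) s _ hRv
        have e1 : ∑ x ∈ cnbhd G s v, (s.filter (G.Adj x)).card = 2 := by
          rw [hcnv, Finset.sum_pair (Ne.symm hne), hdv, hdu]
        have z1 : (s \ cnbhd G s v).filter (G.Adj v) = ∅ := by
          rw [Finset.eq_empty_iff_forall_notMem]
          intro x hx
          rw [mem_filter, mem_sdiff] at hx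
          have hxu : x ∈ s.filter (G.Adj v) := mem_filter.mpr ⟨hx.1.1, hx.2⟩
          rw [hu, mem_singleton] at hxu
          subst hxu
          exact hx.1.2 (by rw [hcnv]; exact mem_insert_of_mem (mem_singleton_self _))
        have z2 : (s \ cnbhd G s v).filter (G.Adj u) = ∅ := by
          rw [Finset.eq_empty_iff_forall_notMem]
          intro x hx
          rw [mem_filter, mem_sdiff] at hx
          have hxv : x ∈ s.filter (G.Adj u) := mem_filter.mpr ⟨hx.1.1, hx.2⟩
          rw [hufil, mem_singleton] at hxv
          subst hxv
          exact hx.1.2 (by rw [hcnv]; exact mem_insert_self _ _)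
        have e2 : ∑ x ∈ cnbhd G s v, ((s \ cnbhd G s v).filter (G.Adj x)).card = 0 := by
          refine Finset.sum_eq_zero ?_
          intro x hxm
          rw [hcnv, mem_insert, mem_singleton] at hxm
          rcases hxm with rfl | rfl
          · exact card_eq_zero.mpr z1
          · exact card_eq_zero.mpr z2
        omega
      refine combEdge (c1 := ((misSet G (s \ cnbhd G s v)).card : ℝ)) ?_
        (hIH _ hRv ⟨v, mem_insert_self _ _⟩) (by positivity) ?_
      · exact_mod_cast hM
      · refine EdiffEdge D hD ?_ ?_
        · have h2s : 2 ≤ s.card := hcnvcard ▸ card_le_card hRv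
          rw [card_sdiff_of_subset hRv, hcnvcard, Nat.cast_sub h2s]
          push_cast
          norm_num
        · have : ((dsum G s : ℕ) : ℝ) ≤ ((dsum G (s \ cnbhd G s v) + 2 : ℕ) : ℝ) :=
            Nat.cast_le.mpr hds
          push_cast at this
          linarith
    · -- pendant with a neighbour of degree ≥ 2
      have hdu2 : 2 ≤ (s.filter (G.Adj u)).card := by
        have h1' : 0 < (s.filter (G.Adj u)).card :=
          card_pos.mpr ⟨v, mem_filter.mpr ⟨hv, hvu.symm⟩⟩
        omega
      have hRu : cnbhd G s u ⊆ s := cnbhd_subset hus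
      refine comb2b (c1 := ((misSet G (s \ cnbhd G s v)).card : ℝ))
        (c2 := ((misSet G (s \ cnbhd G s u)).card : ℝ)) ?_
        (hIH _ hRv ⟨v, mem_insert_self _ _⟩) (hIH _ hRu ⟨u, mem_insert_self _ _⟩) ?_ ?_
      · have : (misSet G s).card
            ≤ (misSet G (s \ cnbhd G s v)).card + (misSet G (s \ cnbhd G s u)).card := by
          omega
        exact_mod_cast this
      · have h := hEd _ hRv
        rw [hcnvcard] at h
        norm_num at h ⊢
        linarith
      · have h := hEd _ hRu
        have hc : (3:ℝ) ≤ ((cnbhd G s u).card : ℝ) := by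
          rw [card_cnbhd]
          exact_mod_cast Nat.succ_le_succ hdu2
        nlinarith
  by_cases hdeg0 : ∃ v ∈ s, (s.filter (G.Adj v)).card = 0
  · -- an isolated vertex
    obtain ⟨v, hv, hdv⟩ := hdeg0
    have hempty : (misSet G s).filter (fun I => ¬ v ∈ I) = ∅ := by
      rw [Finset.eq_empty_iff_forall_notMem]
      intro I hI
      rw [mem_filter] at hI
      obtain ⟨y, hyI, hadj⟩ := (mem_misSet.mp hI.1).2.2 v hv hI.2
      have : y ∈ s.filter (G.Adj v) := mem_filter.mpr ⟨(mem_misSet.mp hI.1).1 hyI, hadj⟩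
      rw [card_eq_zero.mp hdv] at this
      exact notMem_empty y this
    have hsplit := Finset.card_filter_add_card_filter_not
      (s := misSet G s) (p := fun I => v ∈ I)
    rw [hempty, card_empty] at hsplit
    have c1 := card_mem_le (G := G) hv
    have hRv : cnbhd G s v ⊆ s := cnbhd_subset hv
    calc ((misSet G s).card : ℝ) ≤ ((misSet G (s \ cnbhd G s v)).card : ℝ) := by
          exact_mod_cast le_trans (by omega) c1
      _ ≤ 2 ^ ((1/2 + 1/(200*(D:ℝ)^2)) * (((s \ cnbhd G s v).card : ℕ) : ℝ)
            - (1/(200*(D:ℝ)^2)) * ((dsum G (s \ cnbhd G s v) : ℕ) : ℝ)) :=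
          hIH _ hRv ⟨v, mem_insert_self _ _⟩
      _ ≤ 2 ^ ((1/2 + 1/(200*(D:ℝ)^2)) * (s.card : ℝ) - (1/(200*(D:ℝ)^2)) * (dsum G s : ℝ)) := by
          refine Real.rpow_le_rpow_of_exponent_le one_le_two ?_
          have h := hEd _ hRv
          have : (0:ℝ) ≤ ((cnbhd G s v).card : ℝ) := by positivity
          nlinarith
  · -- every vertex has degree exactly 2
    have hd2 : ∀ x ∈ s, (s.filter (G.Adj x)).card = 2 := by
      intro x hx
      push_neg at hdeg3 hdeg1 hdeg0
      have h3 := hdeg3 x hx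
      have h1 := hdeg1 x hx
      have h0 := hdeg0 x hx
      omega
    obtain ⟨v, hv⟩ := Finset.nonempty_iff_ne_empty.mpr hs
    obtain ⟨u, w, huw, hfil⟩ := Finset.card_eq_two.mp (hd2 v hv)
    have hum : u ∈ s.filter (G.Adj v) := by rw [hfil]; exact mem_insert_self _ _
    have hwm : w ∈ s.filter (G.Adj v) := by
      rw [hfil]; exact mem_insert_of_mem (mem_singleton_self _)
    have hus : u ∈ s := (mem_filter.mp hum).1
    have hvu : G.Adj v u := (mem_filter.mp hum).2
    have hws : w ∈ s := (mem_filter.mp hwm).1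
    have hvw : G.Adj v w := (mem_filter.mp hwm).2
    have hnadj : ¬ G.Adj u w := fun h => htri u hus v hv w hws hvu.symm hvw h
    -- the three parts
    have hsubset : misSet G s ⊆ ((misSet G s).filter (fun I => v ∈ I)
        ∪ (misSet G s).filter (fun I => u ∈ I))
        ∪ (misSet G s).filter (fun I => w ∈ I ∧ ∀ x ∈ ({u} : Finset V), x ∉ I) := by
      intro I hI
      by_cases hvI : v ∈ I
      · exact mem_union_left _ (mem_union_left _ (mem_filter.mpr ⟨hI, hvI⟩))
      by_cases huI : u ∈ I
      · exact mem_union_left _ (mem_union_right _ (mem_filter.mpr ⟨hI, huI⟩))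
      refine mem_union_right _ (mem_filter.mpr ⟨hI, ?_, ?_⟩)
      · obtain ⟨y, hyI, hadj⟩ := (mem_misSet.mp hI).2.2 v hv hvI
        have : y ∈ s.filter (G.Adj v) := mem_filter.mpr ⟨(mem_misSet.mp hI).1 hyI, hadj⟩
        rw [hfil, mem_insert, mem_singleton] at this
        rcases this with rfl | rfl
        · exact absurd hyI huI
        · exact hyI
      · intro x hx
        rw [mem_singleton] at hx
        subst hx
        exact huI
    have hM : (misSet G s).card ≤ ((misSet G s).filter (fun I => v ∈ I)).card
        + ((misSet G s).filter (fun I => u ∈ I)).card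
        + ((misSet G s).filter (fun I => w ∈ I ∧ ∀ x ∈ ({u} : Finset V), x ∉ I)).card :=
      (card_le_card hsubset).trans ((card_union_le _ _).trans
        (Nat.add_le_add_right (card_union_le _ _) _))
    have c1 := card_mem_le (G := G) hv
    have c2 := card_mem_le (G := G) hus
    have c3 := card_mem_avoid_le (G := G) hws ({u} : Finset V)
      (fun x hx => by
        rw [mem_singleton] at hx
        subst hx
        exact ⟨fun h => hnadj h.symm, huw⟩)
    have hRv : cnbhd G s v ⊆ s := cnbhd_subset hv
    have hRu : cnbhd G s u ⊆ s := cnbhd_subset hus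
    set R3 : Finset V := insert u (cnbhd G s w) with hR3
    have huncw : u ∉ cnbhd G s w := by
      simp only [cnbhd, mem_insert, mem_filter]
      push_neg
      exact ⟨huw, fun _ h => hnadj h.symm⟩
    have hsetR3 : (s \ cnbhd G s w) \ ({u} : Finset V) = s \ R3 := by
      ext x
      simp only [mem_sdiff, mem_singleton, hR3, mem_insert]
      tauto
    rw [hsetR3] at c3
    have hR3s : R3 ⊆ s := insert_subset hus (cnbhd_subset hws)
    have hR3card : R3.card = 4 := by
      rw [hR3, card_insert_of_notMem huncw, card_cnbhd, hd2 w hws]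
    refine comb3 (c1 := ((misSet G (s \ cnbhd G s v)).card : ℝ))
      (c2 := ((misSet G (s \ cnbhd G s u)).card : ℝ))
      (c3 := ((misSet G (s \ R3)).card : ℝ)) ?_
      (hIH _ hRv ⟨v, mem_insert_self _ _⟩) (hIH _ hRu ⟨u, mem_insert_self _ _⟩)
      (hIH _ hR3s ⟨u, mem_insert_self _ _⟩) ?_ ?_ ?_
    · have : (misSet G s).card ≤ (misSet G (s \ cnbhd G s v)).card
          + (misSet G (s \ cnbhd G s u)).card + (misSet G (s \ R3)).card := by omega
      exact_mod_cast this
    · have h := hEd _ hRv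
      have hc : ((cnbhd G s v).card : ℝ) = 3 := by
        rw [card_cnbhd, hd2 v hv]; norm_num
      rw [hc] at h
      linarith
    · have h := hEd _ hRu
      have hc : ((cnbhd G s u).card : ℝ) = 3 := by
        rw [card_cnbhd, hd2 u hus]; norm_num
      rw [hc] at h
      linarith
    · have h := hEd _ hR3s
      rw [hR3card] at h
      norm_num at h ⊢
      linarith

/-- The number of maximal independent sets of a simple graph. -/
noncomputable def misSG {V : Type*} (Γ : SimpleGraph V) : ℕ :=
  Nat.card {I : Set V // (∀ x ∈ I, ∀ y ∈ I, ¬ Γ.Adj x y) ∧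
    ∀ J : Set V, (∀ x ∈ J, ∀ y ∈ J, ¬ Γ.Adj x y) → I ⊆ J → I = J}

set_option maxHeartbeats 2000000 in
open Finset in
/-- Bound on the number of maximal independent sets of an almost triangle-free
graph: if `Γ \ T` is triangle-free with `n` vertices and at least `n/2 + k` edges,
and `Δ(Γ) ≤ D`, then `mis(Γ) ≤ 2^{n/2 − k/(100D²) + 2|T|}`. -/
theorem mis_of_almost_triangle_free_graph
    (n D : ℕ) (hD : 1 ≤ D) (k : ℝ)
    (V : Type) [Fintype V] [DecidableEq V]
    (Γ : SimpleGraph V) [DecidableRel Γ.Adj] (T : Set V)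
    (htri : ∀ x y z : V, x ∉ T → y ∉ T → z ∉ T →
      Γ.Adj x y → Γ.Adj y z → Γ.Adj x z → False)
    (hΔ : Γ.maxDegree ≤ D)
    (hn : n = Tᶜ.ncard)
    (hedges : (n : ℝ) / 2 + k ≤ ({e ∈ Γ.edgeSet | ∀ v ∈ e, v ∉ T}.ncard : ℝ)) :
    (misSG Γ : ℝ) ≤ 2 ^ ((n : ℝ) / 2 - k / (100 * (D : ℝ) ^ 2) + 2 * T.ncard) := by
  classical
  have hdeg : ∀ v, Γ.degree v ≤ D := fun v => (Γ.degree_le_maxDegree v).trans hΔ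
  set s₀ : Finset V := (Set.toFinite Tᶜ).toFinset with hs₀def
  set Tf : Finset V := (Set.toFinite T).toFinset with hTfdef
  have hmem₀ : ∀ x, x ∈ s₀ ↔ x ∉ T := by
    intro x
    rw [hs₀def, Set.Finite.mem_toFinset, Set.mem_compl_iff]
  have hmemT : ∀ x, x ∈ Tf ↔ x ∈ T := by
    intro x
    rw [hTfdef, Set.Finite.mem_toFinset]
  set sA : Finset V → Finset V := fun A => s₀.filter (fun x => ∀ a ∈ A, ¬ Γ.Adj a x)
    with hsAdef
  -- Step 1 : from set-theoretic MIS to finset MIS on `univ`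
  have step1 : misSG Γ ≤ (misSet Γ (Finset.univ : Finset V)).card := by
    unfold misSG
    have hmap : ∀ I : {I : Set V // (∀ x ∈ I, ∀ y ∈ I, ¬ Γ.Adj x y) ∧
        ∀ J : Set V, (∀ x ∈ J, ∀ y ∈ J, ¬ Γ.Adj x y) → I ⊆ J → I = J},
        (Set.toFinite I.1).toFinset ∈ misSet Γ (Finset.univ : Finset V) := by
      rintro ⟨I, hind, hmax⟩
      rw [mem_misSet]
      refine ⟨subset_univ _, ?_, ?_⟩
      · intro x hx y hy
        rw [Set.Finite.mem_toFinset] at hx hy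
        exact hind x hx y hy
      · intro v _ hvI
        rw [Set.Finite.mem_toFinset] at hvI
        by_contra hno
        push_neg at hno
        have hIv : ∀ x ∈ I ∪ {v}, ∀ y ∈ I ∪ {v}, ¬ Γ.Adj x y := by
          intro x hx y hy
          rcases hx with hx | hx
          · rcases hy with hy | hy
            · exact hind x hx y hy
            · rw [Set.mem_singleton_iff] at hy
              subst hy
              intro hadj
              exact hno x ((Set.Finite.mem_toFinset _).mpr hx) hadj.symm
          · rw [Set.mem_singleton_iff] at hx
            subst hx
            rcases hy with hy | hy
            · exact hno y ((Set.Finite.mem_toFinset _).mpr hy)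
            · rw [Set.mem_singleton_iff] at hy
              subst hy
              exact Γ.irrefl
        have heq := hmax (I ∪ {v}) hIv Set.subset_union_left
        have hvI' : v ∉ I := hvI
        have : v ∈ I := by
          rw [heq]
          exact Set.mem_union_right I rfl
        exact hvI' this
    set f : {I : Set V // (∀ x ∈ I, ∀ y ∈ I, ¬ Γ.Adj x y) ∧
        ∀ J : Set V, (∀ x ∈ J, ∀ y ∈ J, ¬ Γ.Adj x y) → I ⊆ J → I = J}
        → {J // J ∈ misSet Γ (Finset.univ : Finset V)} :=
      fun I => ⟨(Set.toFinite I.1).toFinset, hmap I⟩ with hfdef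
    have hinj : Function.Injective f := by
      intro I J h
      apply Subtype.ext
      have h' := congrArg Subtype.val h
      simp only [hfdef] at h'
      have : ((Set.toFinite I.1).toFinset : Set V) = ((Set.toFinite J.1).toFinset : Set V) := by
        rw [h']
      rwa [Set.Finite.coe_toFinset, Set.Finite.coe_toFinset] at this
    calc Nat.card {I : Set V // (∀ x ∈ I, ∀ y ∈ I, ¬ Γ.Adj x y) ∧
          ∀ J : Set V, (∀ x ∈ J, ∀ y ∈ J, ¬ Γ.Adj x y) → I ⊆ J → I = J}
        ≤ Nat.card {J // J ∈ misSet Γ (Finset.univ : Finset V)} :=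
          Nat.card_le_card_of_injective f hinj
      _ = (misSet Γ (Finset.univ : Finset V)).card := Nat.card_eq_finsetCard _
  -- Step 2 : decomposition over subsets of T
  have step2 : (misSet Γ (Finset.univ : Finset V)).card
      ≤ ∑ A ∈ Tf.powerset, (misSet Γ (sA A)).card := by
    have hsub : misSet Γ (Finset.univ : Finset V)
        ⊆ Tf.powerset.biUnion (fun A => (misSet Γ (sA A)).image (fun J => A ∪ J)) := by
      intro I hI
      rw [mem_biUnion]
      refine ⟨I ∩ Tf, mem_powerset.mpr inter_subset_right, ?_⟩
      rw [mem_image]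
      refine ⟨I \ Tf, ?_, ?_⟩
      · rw [mem_misSet] at hI
        obtain ⟨-, hind, hdom⟩ := hI
        rw [mem_misSet]
        refine ⟨?_, ?_, ?_⟩
        · intro x hx
          rw [mem_sdiff] at hx
          rw [hsAdef, mem_filter]
          refine ⟨(hmem₀ x).mpr (fun hxT => hx.2 ((hmemT x).mpr hxT)), ?_⟩
          intro a ha hadj
          exact hind a (mem_inter.mp ha).1 x hx.1 hadj
        · intro x hx y hy
          exact hind x (mem_sdiff.mp hx).1 y (mem_sdiff.mp hy).1
        · intro x hx hxJ
          rw [hsAdef, mem_filter] at hx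
          have hxT : x ∉ T := (hmem₀ x).mp hx.1
          have hxI : x ∉ I := fun h =>
            hxJ (mem_sdiff.mpr ⟨h, fun hTf => hxT ((hmemT x).mp hTf)⟩)
          obtain ⟨y, hyI, hadj⟩ := hdom x (mem_univ x) hxI
          have hyA : y ∉ I ∩ Tf := fun hyA => (hx.2 y hyA) hadj.symm
          exact ⟨y, mem_sdiff.mpr ⟨hyI, fun hyTf => hyA (mem_inter.mpr ⟨hyI, hyTf⟩)⟩, hadj⟩
      · ext x
        simp only [mem_union, mem_inter, mem_sdiff]
        tauto
    calc (misSet Γ (Finset.univ : Finset V)).card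
        ≤ (Tf.powerset.biUnion (fun A => (misSet Γ (sA A)).image (fun J => A ∪ J))).card :=
          card_le_card hsub
      _ ≤ ∑ A ∈ Tf.powerset, ((misSet Γ (sA A)).image (fun J => A ∪ J)).card :=
          card_biUnion_le
      _ ≤ ∑ A ∈ Tf.powerset, (misSet Γ (sA A)).card :=
          Finset.sum_le_sum (fun A _ => card_image_le)
  -- Step 3 : edge double counting
  set Es : Set (Sym2 V) := {e ∈ Γ.edgeSet | ∀ v ∈ e, v ∉ T} with hEsdef
  have step3 : 2 * Es.ncard ≤ dsum Γ s₀ := by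
    set P : Finset (V × V) := (s₀ ×ˢ s₀).filter (fun p => Γ.Adj p.1 p.2) with hPdef
    have h1 : P.card = dsum Γ s₀ := by
      rw [dsum]
      rw [Finset.card_eq_sum_card_fiberwise
        (f := Prod.fst) (t := s₀) (fun p hp => (mem_product.mp (mem_filter.mp hp).1).1)]
      refine Finset.sum_congr rfl (fun v hv => ?_)
      refine Finset.card_bij (fun p _ => p.2) ?_ ?_ ?_
      · intro p hp
        rw [mem_filter] at hp
        obtain ⟨hpP, hp1⟩ := hp
        rw [mem_filter, mem_product] at hpP
        rw [mem_filter]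
        exact ⟨hpP.1.2, hp1 ▸ hpP.2⟩
      · intro p hp q hq h
        rw [mem_filter] at hp hq
        exact Prod.ext (hp.2.trans hq.2.symm) h
      · intro u hu
        rw [mem_filter] at hu
        refine ⟨(v, u), ?_, rfl⟩
        rw [mem_filter, mem_filter, mem_product]
        exact ⟨⟨⟨hv, hu.1⟩, hu.2⟩, rfl⟩
    have hEfin : Es.Finite := Set.toFinite _
    have hmapsto : ∀ p ∈ P, Sym2.mk p.1 p.2 ∈ hEfin.toFinset := by
      rintro ⟨a, b⟩ hp
      rw [mem_filter, mem_product] at hp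
      rw [Set.Finite.mem_toFinset, hEsdef]
      refine ⟨Γ.mem_edgeSet.mpr hp.2, ?_⟩
      intro x hx
      rw [Sym2.mem_iff] at hx
      rcases hx with rfl | rfl
      · exact (hmem₀ x).mp hp.1.1
      · exact (hmem₀ x).mp hp.1.2
    have h2 : 2 * hEfin.toFinset.card ≤ P.card := by
      rw [Finset.card_eq_sum_card_fiberwise hmapsto]
      have : ∀ e ∈ hEfin.toFinset, 2 ≤ (P.filter (fun p => Sym2.mk p.1 p.2 = e)).card := by
        intro e he
        revert he
        induction e using Sym2.ind with
        | _ a b =>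
          intro he
          rw [Set.Finite.mem_toFinset, hEsdef] at he
          obtain ⟨hedge, hT⟩ := he
          have hadj : Γ.Adj a b := Γ.mem_edgeSet.mp hedge
          have hneq : a ≠ b := Γ.ne_of_adj hadj
          have ha : a ∉ T := hT a (Sym2.mem_mk_left a b)
          have hb : b ∉ T := hT b (Sym2.mem_mk_right a b)
          have hpair : ({(a, b), (b, a)} : Finset (V × V))
              ⊆ P.filter (fun p => Sym2.mk p.1 p.2 = s(a, b)) := by
            intro p hp
            rcases mem_insert.mp hp with rfl | hp
            · rw [mem_filter, mem_filter, mem_product]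
              exact ⟨⟨⟨(hmem₀ a).mpr ha, (hmem₀ b).mpr hb⟩, hadj⟩, rfl⟩
            · rw [mem_singleton] at hp
              subst hp
              rw [mem_filter, mem_filter, mem_product]
              exact ⟨⟨⟨(hmem₀ b).mpr hb, (hmem₀ a).mpr ha⟩, hadj.symm⟩, Sym2.eq_swap⟩
          have hc : ({(a, b), (b, a)} : Finset (V × V)).card = 2 := by
            rw [card_insert_of_notMem (by simp [Prod.ext_iff, hneq]), card_singleton]
          exact hc ▸ card_le_card hpair
      calc 2 * hEfin.toFinset.card = ∑ _e ∈ hEfin.toFinset, 2 := by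
            rw [Finset.sum_const, smul_eq_mul, mul_comm]
        _ ≤ ∑ e ∈ hEfin.toFinset, (P.filter (fun p => Sym2.mk p.1 p.2 = e)).card :=
            Finset.sum_le_sum this
    rw [Set.ncard_eq_toFinset_card Es hEfin]
    omega
  -- Step 4 : per-A bound from the key lemma
  set C : ℝ := 1/(200*(D:ℝ)^2) with hCdef
  have hD1 : (1:ℝ) ≤ (D:ℝ) := by exact_mod_cast hD
  have hD0 : (D:ℝ) ≠ 0 := by linarith
  have hC0 : 0 ≤ C := by rw [hCdef]; positivity
  set B : ℝ := (1/2 + C) * (s₀.card : ℝ) - C * (dsum Γ s₀ : ℝ) + (Tf.card : ℝ)/100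
    with hBdef
  have step4 : ∀ A ∈ Tf.powerset, ((misSet Γ (sA A)).card : ℝ) ≤ 2 ^ B := by
    intro A hA
    have htriA : ∀ x ∈ sA A, ∀ y ∈ sA A, ∀ z ∈ sA A,
        Γ.Adj x y → Γ.Adj y z → Γ.Adj x z → False := by
      intro x hx y hy z hz
      rw [hsAdef, mem_filter] at hx hy hz
      exact htri x y z ((hmem₀ x).mp hx.1) ((hmem₀ y).mp hy.1) ((hmem₀ z).mp hz.1)
    have hkey := keyLemma D hD Γ hdeg (sA A) htriA
    refine hkey.trans (Real.rpow_le_rpow_of_exponent_le one_le_two ?_)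
    -- exponent comparison
    have hsub : sA A ⊆ s₀ := by rw [hsAdef]; exact filter_subset _ _
    set R : Finset V := s₀ \ sA A with hRdef
    have hR0 : s₀ \ R = sA A := by
      rw [hRdef, Finset.sdiff_sdiff_self_left, Finset.inter_eq_right.mpr hsub]
    have hds : dsum Γ s₀ ≤ dsum Γ (sA A) + 2 * (R.card * D) := by
      have h1 := dsum_sdiff_le (G := Γ) s₀ R sdiff_subset
      rw [hR0] at h1
      have h2 : ∑ x ∈ R, (s₀.filter (Γ.Adj x)).card ≤ R.card * D := by
        calc ∑ x ∈ R, (s₀.filter (Γ.Adj x)).card ≤ R.card • D :=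
              Finset.sum_le_card_nsmul _ _ _
                (fun x _ => (filter_adj_card_le_degree s₀ x).trans (hdeg x))
          _ = R.card * D := nsmul_eq_mul _ _
      exact h1.trans (Nat.add_le_add_left (Nat.mul_le_mul_left 2 h2) _)
    have hRcard : R.card ≤ Tf.card * D := by
      have hsubR : R ⊆ A.biUnion (fun a => Γ.neighborFinset a) := by
        intro x hx
        rw [hRdef, mem_sdiff, hsAdef, mem_filter] at hx
        rw [mem_biUnion]
        by_contra hcon
        push_neg at hcon
        exact hx.2 ⟨hx.1, fun a ha hadj => hcon a ha ((Γ.mem_neighborFinset a x).mpr hadj)⟩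
      calc R.card ≤ (A.biUnion (fun a => Γ.neighborFinset a)).card := card_le_card hsubR
        _ ≤ ∑ a ∈ A, (Γ.neighborFinset a).card := card_biUnion_le
        _ ≤ A.card • D := Finset.sum_le_card_nsmul _ _ _ (fun a _ => by
              rw [SimpleGraph.card_neighborFinset_eq_degree]; exact hdeg a)
        _ = A.card * D := nsmul_eq_mul _ _
        _ ≤ Tf.card * D := Nat.mul_le_mul_right D (card_le_card (mem_powerset.mp hA))
    -- now real arithmetic
    have hα0 : (0:ℝ) ≤ 1/2 + C := by linarith
    have e0 : ((sA A).card : ℝ) ≤ (s₀.card : ℝ) := by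
      exact_mod_cast card_le_card hsub
    have e0' : (1/2 + C) * ((sA A).card : ℝ) ≤ (1/2 + C) * (s₀.card : ℝ) :=
      mul_le_mul_of_nonneg_left e0 hα0
    have em : (dsum Γ s₀ : ℝ) ≤ (dsum Γ (sA A) : ℝ) + 2 * ((R.card : ℝ) * (D:ℝ)) := by
      have := (Nat.cast_le (α := ℝ)).mpr hds
      push_cast at this
      linarith
    have e1 : C * (dsum Γ s₀ : ℝ) ≤ C * (dsum Γ (sA A) : ℝ)
        + C * (2 * ((R.card : ℝ) * (D:ℝ))) := by
      have := mul_le_mul_of_nonneg_left em hC0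
      rw [mul_add] at this
      linarith
    have e2 : C * (2 * ((R.card : ℝ) * (D:ℝ))) = (2*C*(D:ℝ)) * (R.card : ℝ) := by ring
    have eRc : (R.card : ℝ) ≤ (Tf.card : ℝ) * (D:ℝ) := by exact_mod_cast hRcard
    have e3 : (2*C*(D:ℝ)) * (R.card : ℝ) ≤ (2*C*(D:ℝ)) * ((Tf.card : ℝ) * (D:ℝ)) :=
      mul_le_mul_of_nonneg_left eRc (by positivity)
    have e4 : (2*C*(D:ℝ)) * ((Tf.card : ℝ) * (D:ℝ)) = (Tf.card : ℝ)/100 := by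
      rw [hCdef]
      field_simp
      ring
    rw [hBdef]
    linarith
  -- Final assembly
  have hsum : (misSG Γ : ℝ) ≤ ∑ A ∈ Tf.powerset, ((misSet Γ (sA A)).card : ℝ) := by
    have h12 : misSG Γ ≤ ∑ A ∈ Tf.powerset, (misSet Γ (sA A)).card := step1.trans step2
    have := (Nat.cast_le (α := ℝ)).mpr h12
    push_cast at this
    exact this
  have hfinal : (misSG Γ : ℝ) ≤ 2 ^ ((Tf.card : ℝ) + B) := by
    calc (misSG Γ : ℝ) ≤ ∑ A ∈ Tf.powerset, ((misSet Γ (sA A)).card : ℝ) := hsum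
      _ ≤ ∑ _A ∈ Tf.powerset, (2:ℝ) ^ B := Finset.sum_le_sum step4
      _ = (Tf.powerset.card : ℝ) * 2 ^ B := by rw [Finset.sum_const, nsmul_eq_mul]
      _ = (2:ℝ) ^ ((Tf.card : ℝ)) * 2 ^ B := by
          rw [card_powerset]
          push_cast
          rw [Real.rpow_natCast]
      _ = 2 ^ ((Tf.card : ℝ) + B) := by rw [← Real.rpow_add (by norm_num)]
  refine hfinal.trans (Real.rpow_le_rpow_of_exponent_le one_le_two ?_)
  -- final exponent arithmetic
  have htc : (T.ncard : ℝ) = (Tf.card : ℝ) := by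
    rw [hTfdef, Set.ncard_eq_toFinset_card T (Set.toFinite T)]
  have hn0 : (n : ℝ) = (s₀.card : ℝ) := by
    rw [hn, hs₀def, Set.ncard_eq_toFinset_card Tᶜ (Set.toFinite Tᶜ)]
  have hm0 : (n : ℝ) + 2*k ≤ (dsum Γ s₀ : ℝ) := by
    have h3 := (Nat.cast_le (α := ℝ)).mpr step3
    push_cast at h3
    linarith
  have e1 : C * ((n:ℝ) + 2*k) ≤ C * (dsum Γ s₀ : ℝ) := mul_le_mul_of_nonneg_left hm0 hC0
  have e2 : C * ((n:ℝ) + 2*k) = C * (n:ℝ) + 2*C*k := by ring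
  have e3 : 2*C*k = k / (100*(D:ℝ)^2) := by
    rw [hCdef]
    field_simp
    ring
  have etc : (0:ℝ) ≤ (Tf.card : ℝ) := by positivity
  have e5 : C * (n:ℝ) = C * ((s₀.card : ℕ) : ℝ) := by rw [hn0]
  rw [hBdef, htc, hn0]
  linarith [e1, e2, e3, e5]
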